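/- arXiv:1703.04102 — 5 statements merged into one kernel-verified Lean document; each statement's English description precedes it below -/
import Mathlib

section
/- Let A be a topologically independent subset of a precompact Hausdorff abelian topological group G. Then every continuous character χ : G → 𝕊 (where 𝕊 is the circle group) is finitely A-supported, i.e., the set supp_A(χ) = {a ∈ A : χ(a) ≠ 1} is finite. -/
/-- A subset `A` of a topological abelian group is *topologically independent*. -/
def TopIndep {G : Type*} [AddCommGroup G] [TopologicalSpace G] (A : Set G) : Prop :=
  (0 : G) ∉ A ∧ ∀ W ∈ nhds (0 : G), ∃ U ∈ nhds (0 : G),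
    ∀ B : Finset G, ↑B ⊆ A → ∀ z : G → ℤ,
      (∑ a ∈ B, z a • a) ∈ U → ∀ a ∈ B, z a • a ∈ W

open Complex Real

/-- For any element of the circle other than `1`, some positive power lands in the arc
where the real part is at most `1/2`. -/
lemma exists_pow_re_le_half (t : Circle) (ht : t ≠ 1) :
    ∃ n : ℕ, (((t ^ n : Circle) : ℂ)).re ≤ 1/2 := by
  set θ : ℝ := Complex.arg (t : ℂ) with hθdef
  have hexp : (t : ℂ) = Complex.exp (θ * Complex.I) := by
    conv_lhs => rw [← Complex.norm_mul_exp_arg_mul_I (t : ℂ)]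
    rw [Circle.norm_coe, ofReal_one, one_mul]
  have hre : ∀ m : ℕ, (((t ^ m : Circle) : ℂ)).re = Real.cos (m * θ) := by
    intro m
    have : ((t ^ m : Circle) : ℂ) = Complex.exp (((m * θ : ℝ) : ℂ) * Complex.I) := by
      rw [Circle.coe_pow, hexp, ← Complex.exp_nat_mul]
      push_cast
      ring_nf
    rw [this, Complex.exp_ofReal_mul_I_re]
  have hθne : θ ≠ 0 := by
    intro h0
    apply ht
    have := Circle.exp_arg t
    rw [← hθdef, h0, Circle.exp_zero] at this
    exact this.symm
  set φ : ℝ := |θ| with hφdef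
  have hφpos : 0 < φ := abs_pos.2 hθne
  have hφpi : φ ≤ π := Complex.abs_arg_le_pi _
  have hpi : (0:ℝ) < π := Real.pi_pos
  have hcos : ∀ m : ℕ, Real.cos (m * θ) = Real.cos (m * φ) := by
    intro m
    rw [← Real.cos_abs (m * θ), ← Real.cos_abs (m * φ), abs_mul, abs_mul,
      Nat.abs_cast, _root_.abs_abs]
  set n : ℕ := ⌈(π/3) / φ⌉₊ with hn
  have hratio : (0:ℝ) < (π/3) / φ := div_pos (by linarith) hφpos
  have h1 : π/3 ≤ n * φ := by
    have := Nat.le_ceil ((π/3) / φ)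
    rw [div_le_iff₀ hφpos] at this
    exact this
  have h2 : n * φ ≤ π := by
    rcases le_or_gt φ (π/3) with h | h
    · have hlt : (n : ℝ) < (π/3) / φ + 1 := Nat.ceil_lt_add_one (le_of_lt hratio)
      have : (n : ℝ) * φ < ((π/3) / φ + 1) * φ := by
        exact mul_lt_mul_of_pos_right hlt hφpos
      rw [add_mul, div_mul_cancel₀ _ (ne_of_gt hφpos), one_mul] at this
      linarith
    · have hle : (π/3) / φ ≤ 1 := by
        rw [div_le_one hφpos]; linarith
      have : n ≤ 1 := by
        rw [hn]
        exact_mod_cast Nat.ceil_le.2 (by exact_mod_cast hle.trans (by norm_num))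
      calc (n : ℝ) * φ ≤ 1 * φ := by
            apply mul_le_mul_of_nonneg_right _ (le_of_lt hφpos)
            exact_mod_cast this
        _ ≤ π := by linarith
  refine ⟨n, ?_⟩
  rw [hre, hcos]
  have : Real.cos (n * φ) ≤ Real.cos (π/3) :=
    Real.cos_le_cos_of_nonneg_of_le_pi (by positivity) h2 h1
  rwa [Real.cos_pi_div_three] at this

/-- **Proposition**: if `A` is a topologically independent subset of a precompact Hausdorff
abelian topological group `G`, then every continuous character `χ : G → 𝕊` is finitely
`A`-supported, i.e. `supp_A(χ) = {a ∈ A : χ(a) ≠ 1}` is finite. -/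
theorem finite_support_of_continuous_char
    {G : Type*} [AddCommGroup G] [UniformSpace G] [IsUniformAddGroup G] [T2Space G]
    (hpc : TotallyBounded (Set.univ : Set G))
    (A : Set G) (hA : TopIndep A)
    (χ : AddChar G Circle) (hχ : Continuous χ) :
    {a ∈ A | χ a ≠ 1}.Finite := by
  classical
  by_contra hfin
  have hSinf : {a ∈ A | χ a ≠ 1}.Infinite := hfin
  set S := {a ∈ A | χ a ≠ 1} with hS
  -- choose exponents
  have key : ∀ a ∈ S, ∃ m : ℕ, ((χ a ^ m : Circle) : ℂ).re ≤ 1/2 := fun a ha =>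
    exists_pow_re_le_half (χ a) ha.2
  choose! m hm using key
  -- the open neighborhood W of 0
  set W : Set G := χ ⁻¹' {t : Circle | 1/2 < ((t : ℂ)).re} with hWdef
  have hWopen : IsOpen W := by
    apply IsOpen.preimage hχ
    have : Continuous fun t : Circle => ((t : ℂ)).re :=
      Complex.continuous_re.comp continuous_subtype_val
    exact isOpen_lt continuous_const this
  have hW0 : W ∈ nhds (0 : G) := by
    apply hWopen.mem_nhds
    simp only [hWdef, Set.mem_preimage, Set.mem_setOf_eq, AddChar.map_zero_eq_one]
    norm_num [Circle.coe_one]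
  obtain ⟨U, hU, hUind⟩ := hA.2 W hW0
  -- V with V - V ⊆ U
  obtain ⟨V₀, hV₀, hV₀U⟩ := exists_nhds_zero_half hU
  set V : Set G := V₀ ∩ (-V₀) with hVdef
  have hV : V ∈ nhds (0 : G) := by
    apply Filter.inter_mem hV₀
    simpa using neg_mem_nhds_zero G hV₀
  have hVU : ∀ x ∈ V, ∀ y ∈ V, x - y ∈ U := by
    intro x hx y hy
    have h1 : x ∈ V₀ := hx.1
    have h2 : -y ∈ V₀ := hy.2
    have := hV₀U x h1 (-y) h2
    rwa [← sub_eq_add_neg] at this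
  -- total boundedness: cover by finitely many V-translates
  have hent : {p : G × G | p.2 - p.1 ∈ V} ∈ uniformity G := by
    rw [uniformity_eq_comap_nhds_zero G]
    exact Filter.preimage_mem_comap hV
  obtain ⟨t, htfin, htcov⟩ := hpc _ hent
  -- enumeration of infinitely many support elements
  have f : ℕ ↪ S := hSinf.natEmbedding
  -- partial sums
  set s : ℕ → G := fun k => ∑ i ∈ Finset.range k, (m ((f i : G)) : ℤ) • (f i : G) with hsdef
  have hcov : ∀ k : ℕ, ∃ y ∈ t, y - s k ∈ V := by
    intro k
    have := htcov (Set.mem_univ (s k))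
    simp only [Set.mem_iUnion] at this
    obtain ⟨y, hy, hmem⟩ := this
    exact ⟨y, hy, hmem⟩
  choose y hyt hyV using hcov
  -- pigeonhole
  obtain ⟨j, -, k, -, hjk, hyeq⟩ :=
    Set.infinite_univ.exists_ne_map_eq_of_mapsTo (fun i _ => hyt i) htfin
  wlog hlt : j < k generalizing j k
  · exact this k j hjk.symm hyeq.symm (by omega)
  -- s k - s j ∈ U
  have hsU : s k - s j ∈ U := by
    have h1 := hyV j
    have h2 := hyV k
    rw [hyeq] at h1
    have := hVU (y k - s j) h1 (y k - s k) h2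
    simpa using this
  -- express s k - s j as a sum over a finset of A
  set B : Finset G := (Finset.Ico j k).image (fun i => (f i : G)) with hBdef
  have hinj : Function.Injective (fun i : ℕ => (f i : G)) := by
    intro a b hab
    exact f.injective (Subtype.ext hab)
  have hBA : (B : Set G) ⊆ A := by
    intro g hg
    simp only [hBdef, Finset.coe_image, Set.mem_image] at hg
    obtain ⟨i, -, rfl⟩ := hg
    exact (f i).2.1
  have hsum : (∑ a ∈ B, ((m a : ℤ)) • a) = s k - s j := by
    rw [hBdef, Finset.sum_image (fun a _ b _ h => hinj h)]
    rw [hsdef]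
    simp only
    rw [Finset.sum_Ico_eq_sub _ (le_of_lt hlt)]
  have := hUind B hBA (fun a => (m a : ℤ)) (by rw [hsum]; exact hsU) (f j : G)
    (by
      simp only [hBdef, Finset.mem_image]
      exact ⟨j, Finset.mem_Ico.2 ⟨le_refl j, hlt⟩, rfl⟩)
  -- contradiction with the choice of exponents
  have hmem : (1:ℝ)/2 < ((χ ((m ((f j : G)) : ℤ) • (f j : G)) : Circle) : ℂ).re := this
  rw [AddChar.map_zsmul_eq_zpow, zpow_natCast] at hmem
  have := hm (f j : G) (f j).2
  linarith
end

section
/- Let G be a Hausdorff abelian topological group and let A be a set of nonzero elements of G. Then A is both topologically independent and absolutely Cauchy summable if and only if the topological subgroup ⟨A⟩ generated by A is the Tychonoff direct sum of the cyclic topological groups ⟨a⟩, a ∈ A; that is, if and only if the Kalton map κ_A : S_A → G is an injective group homomorphism and a homeomorphism onto its image ⟨A⟩. -/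
open scoped DirectSum

/-- A subset `A` of a topological abelian group is *absolutely Cauchy summable*. -/
def AbsCauchySummable {G : Type*} [AddCommGroup G] [TopologicalSpace G] (A : Set G) : Prop :=
  ∀ U ∈ nhds (0 : G), ∃ F : Finset G, ↑F ⊆ A ∧
    (AddSubgroup.closure (A \ ↑F) : Set G) ⊆ U

/-- The Kalton map `κ_A : S_A = ⨁_{a ∈ A} ⟨a⟩ → G`, the unique group homomorphism extending
each inclusion `⟨a⟩ → G`. -/
noncomputable def kalton {G : Type*} [AddCommGroup G] (A : Set G) :
    (⨁ a : A, AddSubgroup.zmultiples a.1) →+ G :=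
  letI := Classical.decEq A
  DirectSum.toAddMonoid fun a => (AddSubgroup.zmultiples a.1).subtype

/-- The topology on `S_A = ⨁_{a ∈ A} ⟨a⟩` inherited from the Tychonoff product
`∏_{a ∈ A} ⟨a⟩`, each `⟨a⟩` carrying the subgroup topology from `G`. -/
def sumTop {G : Type*} [AddCommGroup G] [TopologicalSpace G] (A : Set G) :
    TopologicalSpace (⨁ a : A, AddSubgroup.zmultiples a.1) :=
  TopologicalSpace.induced (fun x a => x a) Pi.topologicalSpace

section Aux

open Filter AddSubgroup

variable {G : Type*} [AddCommGroup G] (A : Set G)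

lemma kalton_of [inst : DecidableEq A] (a : A) (y : zmultiples a.1) :
    kalton A (DirectSum.of (fun a : A => zmultiples a.1) a y) = y := by
  obtain rfl : inst = Classical.decEq A := Subsingleton.elim _ _
  letI := Classical.decEq A
  unfold kalton
  exact DirectSum.toAddMonoid_of _ _ _

lemma kalton_eq_sum (x : ⨁ a : A, zmultiples a.1) (s : Finset A)
    (hs : ∀ a : A, a ∉ s → x a = 0) :
    kalton A x = ∑ i ∈ s, ((x i : G)) := by
  classical
  conv_lhs => rw [← DirectSum.sum_support_of x]
  rw [map_sum]
  rw [Finset.sum_subset (fun i hi => by_contra fun h => (DFinsupp.mem_support_iff.1 hi) ?_)]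
  · exact Finset.sum_congr rfl fun i _ => kalton_of A i (x i)
  · intro i _ hi
    simp [DFinsupp.notMem_support_iff.1 hi]
  · exact hs i h

variable [TopologicalSpace G]

lemma sumTop_nhds_zero :
    @nhds _ (sumTop A) 0 = ⨅ a : A, Filter.comap (fun x : ⨁ a : A, zmultiples a.1 => (x a : G)) (nhds (0 : G)) := by
  rw [sumTop, nhds_induced, nhds_pi, Filter.pi, Filter.comap_iInf]
  refine iInf_congr fun a => ?_
  rw [nhds_subtype_eq_comap, Filter.comap_comap, Filter.comap_comap]
  simp only [Function.comp_def, Function.eval]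
  rfl

lemma key_indep (hind : TopIndep A) {W : Set G} (hW : W ∈ nhds (0 : G)) :
    ∃ U ∈ nhds (0 : G), ∀ x : ⨁ a : A, zmultiples a.1,
      kalton A x ∈ U → ∀ a : A, (x a : G) ∈ W := by
  classical
  obtain ⟨U, hU, hBzU⟩ := hind.2 W hW
  refine ⟨U, hU, fun x hx a => ?_⟩
  set z : G → ℤ := fun g => if h : g ∈ A then (mem_zmultiples_iff.1 (x ⟨g, h⟩).2).choose else 0
    with hzdef
  have hzspec : ∀ (g : G) (h : g ∈ A), z g • g = ((x ⟨g, h⟩ : G)) := fun g h => by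
    rw [hzdef]
    simp only [dif_pos h]
    exact (mem_zmultiples_iff.1 (x ⟨g, h⟩).2).choose_spec
  have hBA : ↑(Finset.image Subtype.val (DFinsupp.support x)) ⊆ A := by
    intro g hg
    simp only [Finset.coe_image, Set.mem_image] at hg
    obtain ⟨b, -, rfl⟩ := hg
    exact b.2
  have hsum : ∑ g ∈ Finset.image Subtype.val (DFinsupp.support x), z g • g = kalton A x := by
    rw [Finset.sum_image (fun a _ b _ h => Subtype.val_injective h),
      kalton_eq_sum A x (DFinsupp.support x) (fun a ha => DFinsupp.notMem_support_iff.1 ha)]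
    exact Finset.sum_congr rfl fun i hi => hzspec i.1 i.2
  have hall := hBzU _ hBA z (hsum ▸ hx)
  by_cases ha : a ∈ DFinsupp.support x
  · have h2 := hall a.1 (Finset.mem_image_of_mem _ ha)
    rwa [hzspec a.1 a.2] at h2
  · rw [DFinsupp.notMem_support_iff.1 ha]
    simpa using mem_of_mem_nhds hW

variable [IsTopologicalAddGroup G]

lemma sum_nhds (s : Finset A) {U : Set G} (hU : U ∈ nhds (0 : G)) :
    ∃ V ∈ nhds (0 : G), ∀ g : A → G, (∀ i ∈ s, g i ∈ V) → ∑ i ∈ s, g i ∈ U := by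
  classical
  induction s using Finset.induction_on generalizing U with
  | empty => exact ⟨U, hU, fun g _ => by simpa using mem_of_mem_nhds hU⟩
  | insert _ _ ha ih =>
    obtain ⟨U₂, hU₂, hUU⟩ := exists_nhds_zero_half hU
    obtain ⟨V, hV, hVs⟩ := ih hU₂
    refine ⟨V ∩ U₂, Filter.inter_mem hV hU₂, fun g hg => ?_⟩
    rw [Finset.sum_insert ha]
    refine hUU _ (hg _ (Finset.mem_insert_self _ _)).2 _ (hVs g fun i hi => ?_)
    exact (hg i (Finset.mem_insert_of_mem hi)).1

lemma cont_of_summable (hsum : AbsCauchySummable A) :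
    @nhds _ (sumTop A) 0 ≤ Filter.comap (kalton A) (nhds (0 : G)) := by
  classical
  rw [sumTop_nhds_zero]
  intro t ht
  obtain ⟨U, hU, hUt⟩ := Filter.mem_comap.1 ht
  refine Filter.mem_of_superset ?_ hUt
  obtain ⟨U₁, hU₁, hUU⟩ := exists_nhds_zero_half hU
  obtain ⟨F, hFA, hFcl⟩ := hsum U₁ hU₁
  set E : Finset A := F.preimage Subtype.val (Subtype.val_injective.injOn) with hE
  obtain ⟨V, hV, hVs⟩ := sum_nhds A E hU₁
  have hmem : {x : ⨁ a : A, zmultiples a.1 | ∀ a ∈ E, (x a : G) ∈ V} ∈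
      (⨅ a : A, Filter.comap (fun x : ⨁ a : A, zmultiples a.1 => ((x a : G))) (nhds (0 : G))) := by
    have heq : {x : ⨁ a : A, zmultiples a.1 | ∀ a ∈ E, (x a : G) ∈ V} =
        ⋂ a ∈ E, (fun x : ⨁ a : A, zmultiples a.1 => (x a : G)) ⁻¹' V := by
      ext; simp
    rw [heq]
    refine (Filter.biInter_mem E.finite_toSet).2 fun a _ => ?_
    exact Filter.mem_iInf_of_mem a (Filter.preimage_mem_comap hV)
  refine Filter.mem_of_superset hmem fun x hx => ?_
  have hzero : ∀ a : A, a ∉ E ∪ (DFinsupp.support x \ E) → x a = 0 := by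
    intro a ha
    by_contra h
    simp only [Finset.mem_union, Finset.mem_sdiff, DFinsupp.mem_support_iff] at ha
    tauto
  show kalton A x ∈ U
  rw [kalton_eq_sum A x (E ∪ (DFinsupp.support x \ E)) hzero,
    Finset.sum_union Finset.disjoint_sdiff]
  refine hUU _ (hVs _ fun i hi => hx i hi) _ (hFcl ?_)
  refine AddSubgroup.sum_mem _ fun i hi => ?_
  have hiA : i.1 ∈ A \ ↑F :=
    ⟨i.2, fun hF => (Finset.mem_sdiff.1 hi).2 (Finset.mem_preimage.2 hF)⟩
  exact zmultiples_le.2 (AddSubgroup.subset_closure hiA) (x i).2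

lemma comap_le_of_indep (hind : TopIndep A) :
    Filter.comap (kalton A) (nhds (0 : G)) ≤ @nhds _ (sumTop A) 0 := by
  rw [sumTop_nhds_zero]
  refine le_iInf fun a => ?_
  intro s hs
  obtain ⟨W, hW, hWs⟩ := Filter.mem_comap.1 hs
  obtain ⟨U, hU, hUx⟩ := key_indep A hind hW
  exact Filter.mem_comap.2 ⟨U, hU, fun x hx => hWs (hUx x hx a)⟩

end Aux

section More
open Filter AddSubgroup

variable {G : Type*} [AddCommGroup G] (A : Set G)

lemma kalton_range : Set.range (kalton A) = (AddSubgroup.closure A : Set G) := by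
  classical
  apply Set.Subset.antisymm
  · rintro _ ⟨x, rfl⟩
    rw [kalton_eq_sum A x (DFinsupp.support x) (fun a ha => DFinsupp.notMem_support_iff.1 ha)]
    exact AddSubgroup.sum_mem _ fun i _ =>
      zmultiples_le.2 (AddSubgroup.subset_closure i.2) (x i).2
  · have hle : AddSubgroup.closure A ≤ AddMonoidHom.range (kalton A) := by
      rw [AddSubgroup.closure_le]
      intro a ha
      exact AddMonoidHom.mem_range.2
        ⟨DirectSum.of (fun a : A => zmultiples a.1) ⟨a, ha⟩ ⟨a, mem_zmultiples a⟩,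
          kalton_of A _ _⟩
    intro g hg
    obtain ⟨x, hx⟩ := AddMonoidHom.mem_range.1 (hle hg)
    exact ⟨x, hx⟩

variable [TopologicalSpace G]

lemma kalton_injective [T2Space G] (hind : TopIndep A) : Function.Injective (kalton A) := by
  classical
  rw [injective_iff_map_eq_zero]
  intro x hx
  refine DFinsupp.ext fun a => ?_
  rw [DFinsupp.zero_apply]
  have hval : ∀ W ∈ nhds (0 : G), (x a : G) ∈ W := fun W hW => by
    obtain ⟨U, hU, hk⟩ := key_indep A hind hW
    exact hk x (by rw [hx]; exact mem_of_mem_nhds hU) a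
  have h0 : (x a : G) = 0 := by
    by_contra hne
    exact hval _ (compl_singleton_mem_nhds (Ne.symm hne)) rfl
  exact Subtype.ext h0

lemma summable_of_cont
    (hcont : @nhds _ (sumTop A) 0 ≤ Filter.comap (kalton A) (nhds (0 : G))) :
    AbsCauchySummable A := by
  classical
  intro U hU
  have h1 : (kalton A) ⁻¹' U ∈
      ⨅ a : A, Filter.comap (fun x : ⨁ a : A, zmultiples a.1 => (x a : G)) (nhds (0 : G)) := by
    rw [← sumTop_nhds_zero]
    exact hcont (Filter.preimage_mem_comap hU)
  obtain ⟨I, hIfin, V, hV, hIU⟩ := Filter.mem_iInf.1 h1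
  choose W hW hWV using fun i : I => Filter.mem_comap.1 (hV i)
  refine ⟨(hIfin.toFinset).image Subtype.val, ?_, ?_⟩
  · intro g hg
    simp only [Finset.coe_image, Set.mem_image] at hg
    obtain ⟨b, -, rfl⟩ := hg
    exact b.2
  · intro g hg
    have hrep : ∃ x : ⨁ a : A, zmultiples a.1,
        (∀ a : A, a ∈ I → x a = 0) ∧ kalton A x = g := by
      refine AddSubgroup.closure_induction ?_ ?_ ?_ ?_ hg
      · rintro y ⟨hyA, hyF⟩
        refine ⟨DirectSum.of (fun a : A => zmultiples a.1) ⟨y, hyA⟩ ⟨y, mem_zmultiples y⟩,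
          fun a ha => ?_, kalton_of A _ _⟩
        refine DirectSum.of_eq_of_ne _ _ _ fun hEq => hyF ?_
        cases hEq
        exact Finset.mem_coe.2 (Finset.mem_image.2 ⟨_, hIfin.mem_toFinset.2 ha, rfl⟩)
      · exact ⟨0, fun a _ => rfl, map_zero _⟩
      · rintro p q hp hq ⟨xp, hxp, rfl⟩ ⟨xq, hxq, rfl⟩
        refine ⟨xp + xq, fun a ha => ?_, (kalton A).map_add xp xq⟩
        rw [DFinsupp.add_apply, hxp a ha, hxq a ha, add_zero]
      · rintro p hp ⟨xp, hxp, rfl⟩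
        refine ⟨-xp, fun a ha => ?_, (kalton A).map_neg xp⟩
        rw [DFinsupp.neg_apply, hxp a ha, neg_zero]
    obtain ⟨x, hx0, rfl⟩ := hrep
    have hxV : x ∈ ⋂ i : I, V i := Set.mem_iInter.2 fun i => hWV i (by
      show (x i.1 : G) ∈ W i
      rw [hx0 i.1 i.2]
      simpa using mem_of_mem_nhds (hW i))
    show x ∈ ⇑(kalton A) ⁻¹' U
    rw [hIU]
    exact hxV

variable [IsTopologicalAddGroup G]

lemma indep_of_inducing (hA : ∀ a ∈ A, a ≠ 0)
    (hemb : @Topology.IsInducing _ _ (sumTop A) _ (kalton A)) : TopIndep A := by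
  classical
  have hnhds : @nhds _ (sumTop A) 0 = Filter.comap (kalton A) (nhds (0 : G)) := by
    letI := sumTop A
    have h := hemb.nhds_eq_comap 0
    rwa [map_zero] at h
  refine ⟨fun h0 => hA 0 h0 rfl, fun W hW => ?_⟩
  obtain ⟨F, hFA, hFcl⟩ := summable_of_cont A hnhds.le W hW
  set E : Finset A := F.preimage Subtype.val Subtype.val_injective.injOn with hE
  have hmem : {x : ⨁ a : A, zmultiples a.1 | ∀ a ∈ E, (x a : G) ∈ W} ∈ @nhds _ (sumTop A) 0 := by
    rw [sumTop_nhds_zero]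
    have heq : {x : ⨁ a : A, zmultiples a.1 | ∀ a ∈ E, (x a : G) ∈ W} =
        ⋂ a ∈ E, (fun x : ⨁ a : A, zmultiples a.1 => (x a : G)) ⁻¹' W := by
      ext; simp
    rw [heq]
    refine (Filter.biInter_mem E.finite_toSet).2 fun a _ => ?_
    exact Filter.mem_iInf_of_mem a (Filter.preimage_mem_comap hW)
  rw [hnhds] at hmem
  obtain ⟨U, hU, hUsub⟩ := Filter.mem_comap.1 hmem
  refine ⟨U, hU, fun B hBA z hzU g₀ hg₀ => ?_⟩
  by_cases hgF : g₀ ∈ F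
  · set x : ⨁ a : A, zmultiples a.1 := ∑ g ∈ B.attach,
      DirectSum.of (fun a : A => zmultiples a.1) ⟨g.1, hBA g.2⟩
        ⟨z g.1 • g.1, zsmul_mem_zmultiples _ _⟩ with hx
    have hκ : kalton A x = ∑ g ∈ B, z g • g := by
      rw [hx, map_sum, ← Finset.sum_attach B (fun g => z g • g)]
      exact Finset.sum_congr rfl fun g _ => kalton_of A _ _
    have hxU : x ∈ (kalton A) ⁻¹' U := by
      rw [Set.mem_preimage, hκ]; exact hzU
    have hxW := hUsub hxU (⟨g₀, hBA hg₀⟩ : A) (Finset.mem_preimage.2 hgF)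
    have hxa : x ⟨g₀, hBA hg₀⟩ = ⟨z g₀ • g₀, zsmul_mem_zmultiples _ _⟩ := by
      rw [hx, DFinsupp.finset_sum_apply,
        Finset.sum_eq_single_of_mem (⟨g₀, hg₀⟩ : {g // g ∈ B}) (Finset.mem_attach _ _)]
      · exact DirectSum.of_eq_same _ _
      · intro b _ hb
        refine DirectSum.of_eq_of_ne _ _ _ fun hEq => hb ?_
        have hbg : b.1 = g₀ := (congrArg Subtype.val hEq).symm
        exact Subtype.ext hbg
    rw [hxa] at hxW
    exact hxW
  · have hg₀AF : g₀ ∈ A \ ↑F := ⟨hBA hg₀, hgF⟩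
    exact hFcl (zmultiples_le.2 (AddSubgroup.subset_closure hg₀AF)
      (zsmul_mem_zmultiples _ _))

end More

/-- **Fact (DSS, Theorem 5.1)**: a set `A` of nonzero elements of a Hausdorff abelian
topological group is both topologically independent and absolutely Cauchy summable iff the
topological subgroup `⟨A⟩` is the Tychonoff direct sum of the cyclic topological groups `⟨a⟩`,
`a ∈ A`, i.e. iff the Kalton map is an injective homomorphism and a homeomorphism onto its
image `⟨A⟩`. -/
theorem topIndep_and_absCauchySummable_iff_tychonoffDirectSum
    {G : Type*} [AddCommGroup G] [TopologicalSpace G] [IsTopologicalAddGroup G] [T2Space G]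
    (A : Set G) (hA : ∀ a ∈ A, a ≠ 0) :
    (TopIndep A ∧ AbsCauchySummable A) ↔
      (Function.Injective (kalton A) ∧
       Set.range (kalton A) = (AddSubgroup.closure A : Set G) ∧
       (letI := sumTop A; Topology.IsEmbedding (kalton A))) := by
  constructor
  · rintro ⟨hind, hsum⟩
    have hnhds : @nhds _ (sumTop A) 0 = Filter.comap (kalton A) (nhds (0 : G)) :=
      le_antisymm (cont_of_summable A hsum) (comap_le_of_indep A hind)
    have hinj := kalton_injective A hind
    refine ⟨hinj, kalton_range A, ?_⟩
    letI := sumTop A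
    refine ⟨⟨?_⟩, hinj⟩
    refine IsTopologicalAddGroup.ext ?_ (topologicalAddGroup_induced (kalton A)) ?_
    · exact topologicalAddGroup_induced
        (DFinsupp.coeFnAddMonoidHom : (⨁ a : A, AddSubgroup.zmultiples a.1) →+ _)
    · have h2 : @nhds _ (TopologicalSpace.induced (⇑(kalton A)) inferInstance) 0 =
          Filter.comap (kalton A) (nhds (0 : G)) := by
        rw [nhds_induced, map_zero]
      exact hnhds.trans h2.symm
  · rintro ⟨hinj, hrange, hemb⟩
    letI := sumTop A
    have hind := indep_of_inducing A hA hemb.toIsInducing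
    have hnhds : @nhds _ (sumTop A) 0 = Filter.comap (kalton A) (nhds (0 : G)) := by
      have h := hemb.toIsInducing.nhds_eq_comap 0
      rwa [map_zero] at h
    exact ⟨hind, summable_of_cont A hnhds.le⟩
end

section
/- Let A be an infinite independent subset of an abelian group G equipped with the discrete topology. Then A is topologically independent, but the topological subgroup ⟨A⟩ generated by A is not the Tychonoff direct sum of the cyclic topological groups ⟨a⟩, a ∈ A; that is, the Kalton map κ_A : S_A → G is not simultaneously an injective homomorphism and a homeomorphism onto its image ⟨A⟩. -/
open scoped DirectSum

/-- A subset `A` of nonzero elements of an abelian group is *independent*. -/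
def Indep {G : Type*} [AddCommGroup G] (A : Set G) : Prop :=
  (0 : G) ∉ A ∧ ∀ B : Finset G, ↑B ⊆ A → ∀ z : G → ℤ,
    (∑ a ∈ B, z a • a) = 0 → ∀ a ∈ B, z a • a = 0

/-- **Example**: an infinite independent subset `A` of a discrete abelian group is topologically
independent, yet `⟨A⟩` is not the Tychonoff direct sum of the cyclic groups `⟨a⟩`, `a ∈ A`:
the Kalton map is not simultaneously an injective homomorphism and a homeomorphism onto its
image. -/
theorem discrete_infinite_indep_not_tychonoffDirectSum
    {G : Type*} [AddCommGroup G] [TopologicalSpace G] [DiscreteTopology G]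
    (A : Set G) (hInf : A.Infinite) (hInd : Indep A) :
    TopIndep A ∧
      ¬ (Function.Injective (kalton A) ∧
         (letI := sumTop A; Topology.IsEmbedding (kalton A))) := by
  classical
  constructor
  · refine ⟨hInd.1, fun W hW => ⟨{0}, ?_, ?_⟩⟩
    · exact IsOpen.mem_nhds (isOpen_discrete _) rfl
    · intro B hB z hz a ha
      have hz0 : (∑ a ∈ B, z a • a) = 0 := hz
      rw [hInd.2 B hB z hz0 a ha]
      exact mem_of_mem_nhds hW
  · rintro ⟨hinj, hemb⟩
    haveI : Infinite ↥A := hInf.to_subtype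
    -- {0} is open in the sumTop topology
    have hopen : @IsOpen _ (sumTop A)
        ({0} : Set (⨁ a : A, AddSubgroup.zmultiples a.1)) := by
      have h1 : @IsOpen _ (sumTop A) ((kalton A) ⁻¹' {kalton A 0}) := by
        letI := sumTop A
        exact hemb.continuous.isOpen_preimage _ (isOpen_discrete _)
      have h2 : (kalton A) ⁻¹' {kalton A 0} = {0} := by
        ext x
        simp only [Set.mem_preimage, Set.mem_singleton_iff, map_zero]
        exact ⟨fun h => hinj (by simpa using h), fun h => by simp [h]⟩
      rwa [h2] at h1
    rw [sumTop, isOpen_induced_iff] at hopen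
    obtain ⟨S, hSopen, hSpre⟩ := hopen
    have h0S : (0 : ∀ a : A, AddSubgroup.zmultiples a.1) ∈ S := by
      have : (0 : ⨁ a : A, AddSubgroup.zmultiples a.1) ∈
          (fun x (a : A) => x a) ⁻¹' S := by rw [hSpre]; rfl
      exact this
    have hSnhds : S ∈ nhds (0 : ∀ a : A, AddSubgroup.zmultiples a.1) :=
      hSopen.mem_nhds h0S
    rw [nhds_pi, Filter.mem_pi] at hSnhds
    obtain ⟨I, hIfin, t, ht, hsub⟩ := hSnhds
    obtain ⟨a, ha⟩ := hIfin.infinite_compl.nonempty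
    set x : ⨁ a : A, AddSubgroup.zmultiples a.1 :=
      DirectSum.of (fun a : A => AddSubgroup.zmultiples a.1) a
        ⟨a.1, AddSubgroup.mem_zmultiples _⟩ with hx
    have hxS : x ∈ (fun x (b : A) => x b) ⁻¹' S := by
      apply hsub
      intro i hi
      show x i ∈ t i
      have hne : i ≠ a := fun h => ha (h ▸ hi)
      have : x i = 0 := DirectSum.of_eq_of_ne _ _ _ hne
      rw [this]
      exact mem_of_mem_nhds (ht i)
    rw [hSpre] at hxS
    have hx0 : x = 0 := hxS
    have : x a = ⟨a.1, AddSubgroup.mem_zmultiples _⟩ := DirectSum.of_eq_same _ _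
    rw [hx0] at this
    have ha0 : (a : G) = 0 := by
      have := congrArg Subtype.val this.symm
      simpa using this
    exact hInd.1 (ha0 ▸ a.2)
end

section
/- Let G be a Hausdorff topological abelian group and let g be a nonzero topological generator of G (i.e., the cyclic subgroup ⟨g⟩ is dense in G). Then the singleton {g} is a maximal topologically independent subset of G: {g} is topologically independent, and no topologically independent subset of G properly contains {g}. -/
/-- **Lemma**: if `g` is a nonzero topological generator of a Hausdorff topological abelian
group `G` (i.e. `⟨g⟩` is dense in `G`), then `{g}` is a maximal topologically independent
subset of `G`. -/
theorem singleton_topGenerator_maximal_topIndep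
    {G : Type*} [AddCommGroup G] [TopologicalSpace G] [IsTopologicalAddGroup G] [T2Space G]
    (g : G) (hg : g ≠ 0) (hdense : Dense (AddSubgroup.zmultiples g : Set G)) :
    TopIndep {g} ∧ ∀ B : Set G, TopIndep B → ¬ ({g} ⊂ B) := by
  constructor
  · refine ⟨fun h0 => hg (Set.mem_singleton_iff.mp h0).symm, ?_⟩
    intro W hW
    refine ⟨W, hW, ?_⟩
    intro B hB z hsum a haB
    have haA : a ∈ ({g} : Set G) := hB haB
    have ha : a = g := haA
    have hBsub : B ⊆ {g} := by
      intro x hx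
      have : x ∈ ({g} : Set G) := hB hx
      simpa using this
    rcases Finset.subset_singleton_iff.mp hBsub with hB0 | hB1
    · subst hB0; simp at haB
    · rw [hB1, Finset.sum_singleton] at hsum
      rw [ha]; exact hsum
  · intro B hB hsub
    obtain ⟨hsubset, hne⟩ := hsub
    classical
    obtain ⟨h, hhB, hhg⟩ := Set.not_subset.mp hne
    have hgB : g ∈ B := hsubset rfl
    have hgh : g ≠ h := fun e => hhg (by simp [← e])
    have hh0 : h ≠ 0 := fun e => hB.1 (e ▸ hhB)
    have hWmem : ({-h}ᶜ : Set G) ∈ nhds (0 : G) :=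
      compl_singleton_mem_nhds (by simpa using hh0)
    obtain ⟨U, hU, hprop⟩ := hB.2 _ hWmem
    -- find n with n • g - h ∈ U
    have hcont : Continuous fun x : G => x - h := continuous_id.sub continuous_const
    have hpre : ((fun x : G => x - h) ⁻¹' U) ∈ nhds h := by
      have := hcont.continuousAt (x := h)
      have h0 : (fun x : G => x - h) h = 0 := by simp
      exact this (by rw [h0]; exact hU)
    obtain ⟨y, hy1, hy2⟩ := mem_closure_iff_nhds.mp (hdense h) _ hpre
    obtain ⟨n, rfl⟩ := AddSubgroup.mem_zmultiples_iff.mp hy2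
    set z : G → ℤ := fun x => if x = h then -1 else n with hz
    have hsum : (∑ a ∈ ({g, h} : Finset G), z a • a) ∈ U := by
      rw [Finset.sum_insert (by simp [hgh]), Finset.sum_singleton]
      have : z g • g + z h • h = n • g - h := by
        simp [hz, hgh, sub_eq_add_neg]
      rw [this]
      exact hy1
    have hcoe : ↑({g, h} : Finset G) ⊆ B := by
      intro x hx
      rcases Finset.mem_insert.mp hx with rfl | hx
      · exact hgB
      · exact (Finset.mem_singleton.mp hx) ▸ hhB
    have hfin := hprop {g, h} hcoe z hsum h (by simp)
    apply hfin
    simp [hz]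
end

section
/- There exist a compact Hausdorff abelian topological group G and non-torsion elements a, b, c of G such that neither {a, c} nor {b, c} is topologically independent, while {a, b} is topologically independent. -/
lemma aux_VN_mem_nhds {M : ℕ → Type*} [∀ n, AddZeroClass (M n)] [∀ n, TopologicalSpace (M n)]
    [∀ n, DiscreteTopology (M n)] (N : ℕ) :
    {x : ∀ n, M n | ∀ n, n < N → x n = 0} ∈ nhds (0 : ∀ n, M n) := by
  have : {x : ∀ n, M n | ∀ n, n < N → x n = 0} = Set.pi (Set.Iio N) (fun n => {0}) := by
    ext x; simp [Set.pi, Set.mem_Iio]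
  rw [this]
  exact (isOpen_set_pi (Set.finite_Iio N) (fun _ _ => isOpen_discrete _)).mem_nhds
    (fun n _ => rfl)

lemma aux_exists_VN {M : ℕ → Type*} [∀ n, AddZeroClass (M n)] [∀ n, TopologicalSpace (M n)]
    [∀ n, DiscreteTopology (M n)] {W : Set (∀ n, M n)} (hW : W ∈ nhds (0 : ∀ n, M n)) :
    ∃ N, {x : ∀ n, M n | ∀ n, n < N → x n = 0} ⊆ W := by
  rw [nhds_pi, Filter.mem_pi] at hW
  obtain ⟨I, hIfin, t, ht, hsub⟩ := hW
  obtain ⟨N, hN⟩ := hIfin.bddAbove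
  refine ⟨N + 1, fun x hx => hsub fun i hi => ?_⟩
  have : x i = 0 := hx i (Nat.lt_succ_of_le (hN hi))
  rw [this]
  exact mem_of_mem_nhds (ht i)

lemma aux_nontorsion {p : ℕ} (hp : 2 ≤ p) {z : ℤ}
    (hz : ∀ n : ℕ, (z : ZMod (p^(n+1))) = 0) : z = 0 := by
  haveI : ∀ n : ℕ, NeZero (p^(n+1)) := fun n => NeZero.of_pos (pow_pos (by omega) _)
  have hdvd : (↑(p^(z.natAbs+1)) : ℤ) ∣ z :=
    (ZMod.intCast_zmod_eq_zero_iff_dvd _ _).mp (hz z.natAbs)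
  have hdvd' : p^(z.natAbs+1) ∣ z.natAbs := Int.natCast_dvd_natCast.mp
    (Int.dvd_natAbs.mpr hdvd)
  have hlt : z.natAbs < p ^ (z.natAbs + 1) :=
    lt_of_lt_of_le (Nat.lt_two_pow_self (n := z.natAbs))
      (le_trans (Nat.pow_le_pow_left hp _) (Nat.pow_le_pow_right (by omega) (by omega)))
  exact Int.natAbs_eq_zero.mp (Nat.eq_zero_of_dvd_of_lt hdvd' hlt)

lemma aux_one_ne_zero {p : ℕ} (hp : 2 ≤ p) (n : ℕ) : (1 : ZMod (p^(n+1))) ≠ 0 := by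
  haveI : Fact (1 < p^(n+1)) := ⟨Nat.one_lt_pow (by omega) (by omega)⟩
  exact one_ne_zero

lemma aux_cast_pow_zero {p : ℕ} (hp : 0 < p) {n N : ℕ} (hn : n < N) :
    (Int.cast ((p:ℤ)^(N+1)) : ZMod (p^(n+1))) = 0 := by
  haveI : NeZero (p^(n+1)) := NeZero.of_pos (pow_pos hp _)
  rw [ZMod.intCast_zmod_eq_zero_iff_dvd]
  push_cast
  exact pow_dvd_pow _ (by omega)

abbrev MyG : Type := (∀ n : ℕ, ZMod (2^(n+1))) × (∀ n : ℕ, ZMod (3^(n+1)))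

/-- **Example**: there are a compact Hausdorff abelian topological group `G` and non-torsion
elements `a, b, c ∈ G` such that neither `{a, c}` nor `{b, c}` is topologically independent,
while `{a, b}` is topologically independent. -/
theorem exists_compact_nonTorsion_topIndep_example :
    ∃ (G : Type) (_ : AddCommGroup G) (_ : TopologicalSpace G),
      IsTopologicalAddGroup G ∧ CompactSpace G ∧ T2Space G ∧
      ∃ a b c : G,
        (∀ n : ℤ, n • a = 0 → n = 0) ∧
        (∀ n : ℤ, n • b = 0 → n = 0) ∧
        (∀ n : ℤ, n • c = 0 → n = 0) ∧
        ¬ TopIndep {a, c} ∧ ¬ TopIndep {b, c} ∧ TopIndep {a, b} := by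
  classical
  refine ⟨MyG, inferInstance, inferInstance, inferInstance, inferInstance, inferInstance, ?_⟩
  set a : MyG := (fun _ => 1, 0) with ha
  set b : MyG := (0, fun _ => 1) with hb
  set c : MyG := (fun _ => 1, fun _ => 1) with hc
  have hab : a ≠ b := by
    intro h
    have := congrArg (fun x : MyG => x.1 0) h
    exact aux_one_ne_zero (le_refl 2) 0 this
  have hac : a ≠ c := by
    intro h
    have := congrArg (fun x : MyG => x.2 0) h
    exact aux_one_ne_zero (by norm_num) 0 this.symm
  have hbc : b ≠ c := by
    intro h
    have := congrArg (fun x : MyG => x.1 0) h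
    exact aux_one_ne_zero (le_refl 2) 0 this.symm
  refine ⟨a, b, c, ?_, ?_, ?_, ?_, ?_, ?_⟩
  · -- a non-torsion
    intro n h
    refine aux_nontorsion (p := 2) le_rfl (fun m => ?_)
    have := congrArg (fun x : MyG => x.1 m) h
    simpa [ha] using this
  · intro n h
    refine aux_nontorsion (p := 3) (by norm_num) (fun m => ?_)
    have := congrArg (fun x : MyG => x.2 m) h
    simpa [hb] using this
  · intro n h
    refine aux_nontorsion (p := 2) le_rfl (fun m => ?_)
    have := congrArg (fun x : MyG => x.1 m) h
    simpa [hc] using this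
  · -- ¬ TopIndep {a, c}
    rintro ⟨-, h⟩
    have hW : {x : MyG | x.1 0 = 0} ∈ nhds (0 : MyG) := by
      have hcont : Continuous fun x : MyG => x.1 0 := (continuous_apply 0).comp continuous_fst
      exact IsOpen.mem_nhds (isOpen_discrete ({0} : Set (ZMod (2^(0+1)))) |>.preimage hcont) rfl
    obtain ⟨U, hU, hind⟩ := h _ hW
    rw [show (0 : MyG) = ((0, 0) : _ × _) from rfl, mem_nhds_prod_iff] at hU
    obtain ⟨U1, hU1, U2, hU2, hsub⟩ := hU
    obtain ⟨N1, hN1⟩ := aux_exists_VN hU1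
    obtain ⟨N2, hN2⟩ := aux_exists_VN hU2
    set N := max N1 N2 with hN
    set zf : MyG → ℤ := fun g => if g = a then -(3:ℤ)^(N+1) else (3:ℤ)^(N+1) with hzf
    have hza : zf a = -(3:ℤ)^(N+1) := if_pos rfl
    have hzc : zf c = (3:ℤ)^(N+1) := if_neg (Ne.symm hac)
    have hsum : (∑ g ∈ ({a, c} : Finset MyG), zf g • g) ∈ U := by
      rw [Finset.sum_pair hac, hza, hzc]
      refine hsub ⟨hN1 (fun n hn => ?_), hN2 (fun n hn => ?_)⟩
      · show ((-(3:ℤ)^(N+1)) • a + ((3:ℤ)^(N+1)) • c).1 n = 0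
        simp [ha, hc]
      · show ((-(3:ℤ)^(N+1)) • a + ((3:ℤ)^(N+1)) • c).2 n = 0
        have hnN : n < N := lt_of_lt_of_le hn (le_max_right _ _)
        have h30 := aux_cast_pow_zero (p := 3) (by norm_num) hnN
        simp [ha, hc, zsmul_eq_mul]
        simpa using h30
    have hmem := hind ({a, c} : Finset MyG) (by simp) zf hsum a (by simp)
    have hne : (zf a • a).1 0 ≠ 0 := by
      rw [hza]
      show ((-(3:ℤ)^(N+1)) • a).1 0 ≠ 0
      have : ((-(3:ℤ)^(N+1)) • a).1 0 = ((-(3:ℤ)^(N+1) : ℤ) : ZMod (2^(0+1))) := by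
        simp [ha, zsmul_eq_mul]
      rw [this]
      intro hcast
      have hd := (ZMod.intCast_zmod_eq_zero_iff_dvd _ _).mp hcast
      rw [Int.dvd_neg] at hd
      have h2 : (2:ℤ) ∣ (3:ℤ)^(N+1) := by
        have : ((2^(0+1) : ℕ) : ℤ) = 2 := by norm_num
        rwa [this] at hd
      have := Int.prime_two.dvd_of_dvd_pow h2
      norm_num at this
    exact hne hmem
  · -- ¬ TopIndep {b, c}
    rintro ⟨-, h⟩
    have hW : {x : MyG | x.2 0 = 0} ∈ nhds (0 : MyG) := by
      have hcont : Continuous fun x : MyG => x.2 0 := (continuous_apply 0).comp continuous_snd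
      exact IsOpen.mem_nhds (isOpen_discrete ({0} : Set (ZMod (3^(0+1)))) |>.preimage hcont) rfl
    obtain ⟨U, hU, hind⟩ := h _ hW
    rw [show (0 : MyG) = ((0, 0) : _ × _) from rfl, mem_nhds_prod_iff] at hU
    obtain ⟨U1, hU1, U2, hU2, hsub⟩ := hU
    obtain ⟨N1, hN1⟩ := aux_exists_VN hU1
    obtain ⟨N2, hN2⟩ := aux_exists_VN hU2
    set N := max N1 N2 with hN
    set zf : MyG → ℤ := fun g => if g = b then -(2:ℤ)^(N+1) else (2:ℤ)^(N+1) with hzf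
    have hzb : zf b = -(2:ℤ)^(N+1) := if_pos rfl
    have hzc : zf c = (2:ℤ)^(N+1) := if_neg (Ne.symm hbc)
    have hsum : (∑ g ∈ ({b, c} : Finset MyG), zf g • g) ∈ U := by
      rw [Finset.sum_pair hbc, hzb, hzc]
      refine hsub ⟨hN1 (fun n hn => ?_), hN2 (fun n hn => ?_)⟩
      · show ((-(2:ℤ)^(N+1)) • b + ((2:ℤ)^(N+1)) • c).1 n = 0
        have hnN : n < N := lt_of_lt_of_le hn (le_max_left _ _)
        have h20 := aux_cast_pow_zero (p := 2) (by norm_num) hnN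
        simp [hb, hc, zsmul_eq_mul]
        simpa using h20
      · show ((-(2:ℤ)^(N+1)) • b + ((2:ℤ)^(N+1)) • c).2 n = 0
        simp [hb, hc]
    have hmem := hind ({b, c} : Finset MyG) (by simp) zf hsum b (by simp)
    have hne : (zf b • b).2 0 ≠ 0 := by
      rw [hzb]
      show ((-(2:ℤ)^(N+1)) • b).2 0 ≠ 0
      have : ((-(2:ℤ)^(N+1)) • b).2 0 = ((-(2:ℤ)^(N+1) : ℤ) : ZMod (3^(0+1))) := by
        simp [hb, zsmul_eq_mul]
      rw [this]
      intro hcast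
      have hd := (ZMod.intCast_zmod_eq_zero_iff_dvd _ _).mp hcast
      rw [Int.dvd_neg] at hd
      have h3 : (3:ℤ) ∣ (2:ℤ)^(N+1) := by
        have : ((3^(0+1) : ℕ) : ℤ) = 3 := by norm_num
        rwa [this] at hd
      have := Int.prime_three.dvd_of_dvd_pow h3
      norm_num at this
    exact hne hmem
  · -- TopIndep {a, b}
    constructor
    · intro h0
      rcases h0 with h0 | h0
      · exact aux_one_ne_zero (le_refl 2) 0 (congrArg (fun x : MyG => x.1 0) h0).symm
      · exact aux_one_ne_zero (by norm_num : 2 ≤ 3) 0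
          (congrArg (fun x : MyG => x.2 0) (Set.mem_singleton_iff.mp h0)).symm
    · intro W hW
      rw [show (0 : MyG) = ((0, 0) : _ × _) from rfl, mem_nhds_prod_iff] at hW
      obtain ⟨W1, hW1, W2, hW2, hsub⟩ := hW
      obtain ⟨N1, hN1⟩ := aux_exists_VN hW1
      obtain ⟨N2, hN2⟩ := aux_exists_VN hW2
      refine ⟨{x : MyG | ∀ n, n < N1 → x.1 n = 0} ∩ {x : MyG | ∀ n, n < N2 → x.2 n = 0}, ?_, ?_⟩
      · exact Filter.inter_mem
          (continuous_fst.continuousAt (x := (0:MyG)) (aux_VN_mem_nhds N1))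
          (continuous_snd.continuousAt (x := (0:MyG)) (aux_VN_mem_nhds N2))
      · intro B hB zf hsumU g hg
        have hgab : g = a ∨ g = b := by
          have := hB hg
          simpa [Set.mem_insert_iff] using this
        apply hsub
        rcases hgab with rfl | rfl
        · refine ⟨hN1 (fun n hn => ?_), hN2 (fun n hn => ?_)⟩
          · -- (zf a • a).1 n = 0
            have hsum1 : (∑ x ∈ B, zf x • x).1 n = (zf a • a).1 n := by
              rw [Prod.fst_sum, Finset.sum_apply]
              refine Finset.sum_eq_single_of_mem a hg (fun x hx hxg => ?_)
              rcases (by simpa [Set.mem_insert_iff] using hB hx : x = a ∨ x = b) with rfl | rfl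
              · exact absurd rfl hxg
              · simp [hb]
            have := hsumU.1 n hn
            rw [hsum1] at this
            exact this
          · simp [ha]
        · refine ⟨hN1 (fun n hn => ?_), hN2 (fun n hn => ?_)⟩
          · simp [hb]
          · have hsum2 : (∑ x ∈ B, zf x • x).2 n = (zf b • b).2 n := by
              rw [Prod.snd_sum, Finset.sum_apply]
              refine Finset.sum_eq_single_of_mem b hg (fun x hx hxg => ?_)
              rcases (by simpa [Set.mem_insert_iff] using hB hx : x = a ∨ x = b) with rfl | rfl
              · simp [ha]
              · exact absurd rfl hxg
            have := hsumU.2 n hn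
            rw [hsum2] at this
            exact this
end
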